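/- For all u, v ∈ ℝ³ with u ≠ 0 and v ≠ 0, tr( exp(u·σ) · exp(v·σ) ) = 2·cosh(‖u‖)·cosh(‖v‖) + 2·((u·v)/(‖u‖·‖v‖))·sinh(‖u‖)·sinh(‖v‖), where u·v is the Euclidean inner product. -/

import Mathlib

open Matrix

/-- For `v ∈ ℝ³`, the matrix `v·σ = v₁σ₁ + v₂σ₂ + v₃σ₃` built from the Pauli matrices. -/
noncomputable def pauliDot (v : EuclideanSpace ℝ (Fin 3)) : Matrix (Fin 2) (Fin 2) ℂ :=
  (v 0 : ℂ) • !![0, 1; 1, 0] +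
  (v 1 : ℂ) • !![0, -Complex.I; Complex.I, 0] +
  (v 2 : ℂ) • !![1, 0; 0, -1]

lemma pauliDot_eq (v : EuclideanSpace ℝ (Fin 3)) :
    pauliDot v = !![(v 2 : ℂ), (v 0 : ℂ) - (v 1 : ℂ) * Complex.I;
      (v 0 : ℂ) + (v 1 : ℂ) * Complex.I, -(v 2 : ℂ)] := by
  unfold pauliDot
  ext i j
  fin_cases i <;> fin_cases j <;> simp <;> ring

lemma exp_of_sq (A : Matrix (Fin 2) (Fin 2) ℂ) (c : ℂ) (hc : c ≠ 0)
    (hA : A * A = c ^ 2 • 1) :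
    NormedSpace.exp A = Complex.cosh c • 1 + (Complex.sinh c / c) • A := by
  have heven : ∀ k : ℕ, A ^ (2 * k) = ((c ^ 2) ^ k) • (1 : Matrix (Fin 2) (Fin 2) ℂ) := by
    intro k
    induction k with
    | zero => simp
    | succ k ih =>
        have : 2 * (k + 1) = 2 * k + 2 := by ring
        rw [this, pow_add, pow_two, hA, ih, smul_mul_smul_comm, one_mul, ← pow_succ]
  have hodd : ∀ k : ℕ, A ^ (2 * k + 1) = ((c ^ 2) ^ k) • A := by
    intro k
    rw [pow_succ, heven, smul_mul_assoc, one_mul]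
  have h1 : HasSum (fun k : ℕ => ((Nat.factorial (2 * k) : ℂ))⁻¹ • A ^ (2 * k))
      (Complex.cosh c • (1 : Matrix (Fin 2) (Fin 2) ℂ)) := by
    have := (Complex.hasSum_cosh c).smul_const (1 : Matrix (Fin 2) (Fin 2) ℂ)
    convert this using 2 with k
    rw [heven, smul_smul, ← pow_mul, div_eq_mul_inv, mul_comm]
  have h2 : HasSum (fun k : ℕ => ((Nat.factorial (2 * k + 1) : ℂ))⁻¹ • A ^ (2 * k + 1))
      ((Complex.sinh c / c) • A) := by
    have := ((Complex.hasSum_sinh c).div_const c).smul_const A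
    convert this using 2 with k
    rw [hodd, smul_smul, ← pow_mul]
    congr 1
    have hf : (((2 * k + 1).factorial : ℕ) : ℂ) ≠ 0 :=
      Nat.cast_ne_zero.mpr (Nat.factorial_ne_zero _)
    rw [div_right_comm, pow_succ, mul_div_cancel_right₀ _ hc, div_eq_mul_inv, mul_comm]
  have hsum : HasSum (fun n : ℕ => ((Nat.factorial n : ℂ))⁻¹ • A ^ n)
      (Complex.cosh c • 1 + (Complex.sinh c / c) • A) := HasSum.even_add_odd h1 h2
  rw [NormedSpace.exp_eq_tsum ℂ]
  exact hsum.tsum_eq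

lemma norm_sq_eq (u : EuclideanSpace ℝ (Fin 3)) :
    ‖u‖ ^ 2 = u 0 ^ 2 + u 1 ^ 2 + u 2 ^ 2 := by
  rw [EuclideanSpace.norm_eq, Real.sq_sqrt (by positivity)]
  simp [Fin.sum_univ_three, Real.norm_eq_abs, sq_abs]

lemma pauliDot_sq (u : EuclideanSpace ℝ (Fin 3)) :
    pauliDot u * pauliDot u = ((‖u‖ : ℂ)) ^ 2 • 1 := by
  have h : ((‖u‖ : ℂ)) ^ 2 = (u 0 : ℂ) ^ 2 + (u 1 : ℂ) ^ 2 + (u 2 : ℂ) ^ 2 := by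
    rw [show ((‖u‖ : ℂ)) ^ 2 = ((‖u‖ ^ 2 : ℝ) : ℂ) by push_cast; ring, norm_sq_eq u]
    push_cast
    ring
  rw [pauliDot_eq, h]
  ext i j
  fin_cases i <;> fin_cases j <;>
    simp [Matrix.mul_apply, Fin.sum_univ_two] <;> (first | ring1 | linear_combination (-((u 1 : ℂ)) ^ 2) * Complex.I_sq)

/-- For nonzero `u, v ∈ ℝ³`:
`tr(exp(u·σ) exp(v·σ)) = 2 cosh‖u‖ cosh‖v‖ + 2 (⟨u,v⟩/(‖u‖‖v‖)) sinh‖u‖ sinh‖v‖`. -/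
theorem statement5 (u v : EuclideanSpace ℝ (Fin 3)) (hu : u ≠ 0) (hv : v ≠ 0) :
    (NormedSpace.exp (pauliDot u) * NormedSpace.exp (pauliDot v)).trace =
      ((2 * Real.cosh ‖u‖ * Real.cosh ‖v‖ +
        2 * ((inner ℝ u v : ℝ) / (‖u‖ * ‖v‖)) * Real.sinh ‖u‖ * Real.sinh ‖v‖ : ℝ) : ℂ) := by
  have hau : (‖u‖ : ℂ) ≠ 0 := by
    exact_mod_cast norm_ne_zero_iff.mpr hu
  have hav : (‖v‖ : ℂ) ≠ 0 := by
    exact_mod_cast norm_ne_zero_iff.mpr hv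
  rw [exp_of_sq (pauliDot u) _ hau (pauliDot_sq u),
    exp_of_sq (pauliDot v) _ hav (pauliDot_sq v)]
  have hinner : (inner ℝ u v : ℝ) = u 0 * v 0 + u 1 * v 1 + u 2 * v 2 := by
    simp [PiLp.inner_apply, Fin.sum_univ_three, mul_comm]
  -- trace computations
  have htr1 : (pauliDot u).trace = 0 := by
    rw [pauliDot_eq]; simp [Matrix.trace_fin_two_of]
  have htr2 : (pauliDot v).trace = 0 := by
    rw [pauliDot_eq]; simp [Matrix.trace_fin_two_of]
  have htr3 : (pauliDot u * pauliDot v).trace =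
      2 * ((u 0 : ℂ) * (v 0 : ℂ) + (u 1 : ℂ) * (v 1 : ℂ) + (u 2 : ℂ) * (v 2 : ℂ)) := by
    rw [pauliDot_eq, pauliDot_eq]
    simp [Matrix.trace, Matrix.mul_apply, Fin.sum_univ_two]
    linear_combination (-2 * (u 1 : ℂ) * (v 1 : ℂ)) * Complex.I_sq
  simp only [add_mul, mul_add, smul_mul_smul_comm, one_mul, mul_one,
    Matrix.trace_add, Matrix.trace_smul, Matrix.trace_one, htr1, htr2, htr3,
    Fintype.card_fin, smul_eq_mul, smul_zero, mul_zero, add_zero, zero_add,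
    Nat.cast_ofNat]
  rw [← Complex.ofReal_cosh, ← Complex.ofReal_cosh, ← Complex.ofReal_sinh,
    ← Complex.ofReal_sinh, hinner]
  push_cast
  field_simp
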